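/- Consider the deterministic recursion c_{i+1} = (n·c_i² + c_min²)/((n+1)·c_i) with c_0 > c_min > 0 and n ≥ 2. Then the sequence (c_i) is strictly decreasing, converges to c_min, and the convergence is linear with rate (n-1)/(n+1): lim_{i→∞} (c_{i+1} - c_min)/(c_i - c_min) = (n-1)/(n+1). -/

import Mathlib

open Filter

/-- The recursion `c_{i+1} = (n c_i² + c_min²)/((n+1) c_i)` with `c_0 > c_min > 0`, `n ≥ 2`,
is strictly decreasing, converges to `c_min`, and converges linearly with rate `(n-1)/(n+1)`. -/
theorem informed_recursion_linear (n : ℕ) (hn : 2 ≤ n) (cmin : ℝ) (hmin : 0 < cmin)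
    (c : ℕ → ℝ) (h0 : cmin < c 0)
    (hrec : ∀ i, c (i + 1) = ((n : ℝ) * (c i) ^ 2 + cmin ^ 2) / (((n : ℝ) + 1) * c i)) :
    StrictAnti c ∧ Tendsto c atTop (nhds cmin) ∧
      Tendsto (fun i => (c (i + 1) - cmin) / (c i - cmin)) atTop
        (nhds (((n : ℝ) - 1) / ((n : ℝ) + 1))) := by
  have hn1 : (2:ℝ) ≤ (n:ℝ) := by exact_mod_cast hn
  have hn0 : (0:ℝ) < (n:ℝ) + 1 := by linarith
  -- all terms stay above cmin
  have hc : ∀ i, cmin < c i := by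
    intro i
    induction i with
    | zero => exact h0
    | succ i ih =>
      have hci : 0 < c i := hmin.trans ih
      have hD : 0 < ((n:ℝ)+1) * c i := mul_pos hn0 hci
      have key : (c (i+1) - cmin) * (((n:ℝ)+1) * c i)
          = (c i - cmin) * ((n:ℝ) * c i - cmin) := by
        rw [hrec]
        field_simp
        ring
      have h1 : 0 < (n:ℝ) * c i - cmin := by nlinarith
      nlinarith [mul_pos (sub_pos.2 ih) h1]
  have hci0 : ∀ i, 0 < c i := fun i => hmin.trans (hc i)
  -- strictly decreasing
  have hdec : ∀ i, c (i+1) < c i := by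
    intro i
    have hD : 0 < ((n:ℝ)+1) * c i := mul_pos hn0 (hci0 i)
    have key : (c i - c (i+1)) * (((n:ℝ)+1) * c i)
        = (c i - cmin) * (c i + cmin) := by
      rw [hrec]
      field_simp [(hci0 i).ne']
      ring
    nlinarith [mul_pos (sub_pos.2 (hc i)) (by linarith [hc i] : (0:ℝ) < c i + cmin)]
  have hanti : StrictAnti c := strictAnti_nat_of_succ_lt hdec
  -- convergence to the infimum
  have hbdd : BddBelow (Set.range c) := ⟨cmin, by rintro x ⟨i, rfl⟩; exact (hc i).le⟩
  have hlim : Tendsto c atTop (nhds (⨅ i, c i)) := tendsto_atTop_ciInf hanti.antitone hbdd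
  set L := ⨅ i, c i with hL
  have hLge : cmin ≤ L := le_ciInf fun i => (hc i).le
  have hL0 : 0 < L := hmin.trans_le hLge
  have hlim' : Tendsto (fun i => c (i+1)) atTop (nhds L) :=
    hlim.comp (tendsto_add_atTop_nat 1)
  have hcont : Tendsto (fun i => ((n:ℝ) * (c i)^2 + cmin^2) / (((n:ℝ)+1) * c i)) atTop
      (nhds (((n:ℝ) * L^2 + cmin^2) / (((n:ℝ)+1) * L))) := by
    exact Tendsto.div ((tendsto_const_nhds.mul (hlim.pow 2)).add tendsto_const_nhds)
      (tendsto_const_nhds.mul hlim) (mul_pos hn0 hL0).ne'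
  have heq : ((n:ℝ) * L^2 + cmin^2) / (((n:ℝ)+1) * L) = L :=
    tendsto_nhds_unique (hcont.congr fun i => (hrec i).symm) hlim'
  have hLeq : L = cmin := by
    rw [div_eq_iff (mul_pos hn0 hL0).ne'] at heq
    nlinarith [hLge, hmin]
  rw [hLeq] at hlim
  -- the ratio
  have hratio : ∀ i, (c (i+1) - cmin) / (c i - cmin)
      = ((n:ℝ) * c i - cmin) / (((n:ℝ)+1) * c i) := by
    intro i
    have hne : c i - cmin ≠ 0 := (sub_pos.2 (hc i)).ne'
    rw [div_eq_div_iff hne (mul_pos hn0 (hci0 i)).ne', hrec, sub_mul,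
      div_mul_cancel₀ _ (mul_pos hn0 (hci0 i)).ne']
    ring
  have h3 : Tendsto (fun i => ((n:ℝ) * c i - cmin) / (((n:ℝ)+1) * c i)) atTop
      (nhds (((n:ℝ) * cmin - cmin) / (((n:ℝ)+1) * cmin))) :=
    Tendsto.div ((tendsto_const_nhds.mul hlim).sub tendsto_const_nhds)
      (tendsto_const_nhds.mul hlim) (mul_pos hn0 hmin).ne'
  have hval : ((n:ℝ) * cmin - cmin) / (((n:ℝ)+1) * cmin) = ((n:ℝ) - 1) / ((n:ℝ)+1) := by
    rw [div_eq_div_iff (mul_pos hn0 hmin).ne' hn0.ne']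
    ring
  refine ⟨hanti, hlim, ?_⟩
  rw [← hval]
  exact h3.congr fun i => (hratio i).symm
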